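/- Let T be a tree on n vertices. If T has a perfect matching, then γ_WC(T) = s_WC(T) = n/2; if T has no perfect matching, then Dominator does not win the unbiased Waiter-Client domination game on T (equivalently γ_WC(T) = s_WC(T) = ∞). -/

import Mathlib

/-- `D` is a dominating set of `G`. -/
def IsDomSet {V : Type} (G : SimpleGraph V) (D : Set V) : Prop :=
  ∀ v, v ∈ D ∨ ∃ u ∈ D, G.Adj u v

/-- The unbiased Waiter-Client game on the hypergraph with winning sets `F`.
`wcWin F t W C` means: with Waiter owning `W` and Client owning `C`, Waiter has
a strategy to claim all elements of some winning set within at most `t` further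
rounds. In each round Waiter offers two unclaimed elements; Client keeps one
and the other goes to Waiter (a final single unclaimed element would go to
Client, so it can never help Waiter). -/
def wcWin {X : Type} (F : Set (Set X)) : ℕ → Set X → Set X → Prop
  | 0, W, _ => ∃ e ∈ F, e ⊆ W
  | (t+1), W, C => (∃ e ∈ F, e ⊆ W) ∨
      ∃ x y, x ≠ y ∧ x ∉ W ∪ C ∧ y ∉ W ∪ C ∧
        wcWin F t (insert x W) (insert y C) ∧ wcWin F t (insert y W) (insert x C)

/-- `γ_WC(G)`: the minimum number of rounds within which Dominator (as Waiter)
can guarantee to claim a dominating set in the Waiter-Client domination game on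
`G`, and `⊤` (infinity) if she cannot win at all. -/
noncomputable def gammaWC {V : Type} [Finite V] (G : SimpleGraph V) : ℕ∞ :=
  sInf {n : ℕ∞ | ∃ t : ℕ, n = t ∧ wcWin {D : Set V | IsDomSet G D} t ∅ ∅}

/-- `s_WC(G)`: the minimum size of a dominating set Dominator (as Waiter) can
guarantee to claim in the Waiter-Client domination game on `G` (with no bound
on the number of rounds, `Nat.card V` rounds being enough to exhaust the
board), and `⊤` (infinity) if she cannot win at all. -/
noncomputable def sizeWC {V : Type} [Finite V] (G : SimpleGraph V) : ℕ∞ :=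
  sInf {n : ℕ∞ | ∃ s : ℕ, n = s ∧
    wcWin {D : Set V | IsDomSet G D ∧ D.ncard ≤ s} (Nat.card V) ∅ ∅}

namespace WCaux

variable {X : Type}

theorem wcWin_succ {F : Set (Set X)} {t : ℕ} {W C : Set X} (h : wcWin F t W C) :
    wcWin F (t+1) W C := by
  induction t generalizing W C with
  | zero => exact Or.inl h
  | succ t ih =>
    rcases h with h | ⟨x, y, hxy, hx, hy, h1, h2⟩
    · exact Or.inl h
    · exact Or.inr ⟨x, y, hxy, hx, hy, ih h1, ih h2⟩

theorem wcWin_mono_t {F : Set (Set X)} {t t' : ℕ} (htt : t ≤ t') {W C : Set X}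
    (h : wcWin F t W C) : wcWin F t' W C := by
  induction htt with
  | refl => exact h
  | step _ ih => exact wcWin_succ ih

theorem wcWin_mono_family {F F' : Set (Set X)} (hFF : F ⊆ F') {t : ℕ} {W C : Set X}
    (h : wcWin F t W C) : wcWin F' t W C := by
  induction t generalizing W C with
  | zero => obtain ⟨e, he, hew⟩ := h; exact ⟨e, hFF he, hew⟩
  | succ t ih =>
    rcases h with ⟨e, he, hew⟩ | ⟨x, y, hxy, hx, hy, h1, h2⟩
    · exact Or.inl ⟨e, hFF he, hew⟩
    · exact Or.inr ⟨x, y, hxy, hx, hy, ih h1, ih h2⟩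

theorem not_wcWin_empty {t : ℕ} {W C : Set X} : ¬ wcWin (∅ : Set (Set X)) t W C := by
  induction t generalizing W C with
  | zero => rintro ⟨e, he, -⟩; exact he
  | succ t ih =>
    rintro (⟨e, he, -⟩ | ⟨x, y, _, _, _, h1, _⟩)
    · exact he
    · exact ih h1

/-- Lemma S0: if every winning set must contain `u`, Client protects `u`. -/
theorem lemS0 {F : Set (Set X)} {u : X} (hF : ∀ e ∈ F, u ∈ e) :
    ∀ t (W C : Set X), u ∉ W → ¬ wcWin F t W C := by
  intro t
  induction t with
  | zero => rintro W C hu ⟨e, he, hew⟩; exact hu (hew (hF e he))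
  | succ t ih =>
    rintro W C hu (⟨e, he, hew⟩ | ⟨x, y, hxy, hx, hy, h1, h2⟩)
    · exact hu (hew (hF e he))
    · by_cases hxu : x = u
      · subst hxu
        exact ih _ _ (by simp [hu, hxy]) h2
      · exact ih _ _ (by simp [hu, Ne.symm hxu]) h1

/-- Lemma S: if every winning set contains `u` or `v`, and `u,v ∉ W`, and one of
them is already Client's, then Client wins. -/
theorem lemS {F : Set (Set X)} {u v : X} (hF : ∀ e ∈ F, u ∈ e ∨ v ∈ e) :
    ∀ t (W C : Set X), u ∉ W → v ∉ W → (u ∈ C ∨ v ∈ C) → ¬ wcWin F t W C := by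
  intro t
  induction t with
  | zero =>
    rintro W C hu hv _ ⟨e, he, hew⟩
    rcases hF e he with h | h
    · exact hu (hew h)
    · exact hv (hew h)
  | succ t ih =>
    rintro W C hu hv hC (⟨e, he, hew⟩ | ⟨x, y, hxy, hx, hy, h1, h2⟩)
    · rcases hF e he with h | h
      · exact hu (hew h)
      · exact hv (hew h)
    have hxWC : x ∉ W ∧ x ∉ C := by simpa using hx
    have hyWC : y ∉ W ∧ y ∉ C := by simpa using hy
    -- whichever of u,v is free might be offered; give it to Client
    by_cases hxu : x = u
    · subst hxu
      -- branch: x=u goes to Client, y to Waiter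
      refine ih _ _ ?_ ?_ (Or.inl (Set.mem_insert _ _)) h2
      · rintro (rfl | h); exact hxy rfl; exact hu h
      · rintro (rfl | h)
        · rcases hC with h' | h'; exact hxWC.2 h'; exact hyWC.2 h'
        · exact hv h
    by_cases hxv : x = v
    · subst hxv
      refine ih _ _ ?_ ?_ (Or.inr (Set.mem_insert _ _)) h2
      · rintro (rfl | h)
        · rcases hC with h' | h'; exact hyWC.2 h'; exact hxWC.2 h'
        · exact hu h
      · rintro (rfl | h); exact hxy rfl; exact hv h
    by_cases hyu : y = u
    · subst hyu
      refine ih _ _ ?_ ?_ (Or.inl (Set.mem_insert _ _)) h1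
      · rintro (rfl | h); exact hxy rfl; exact hu h
      · rintro (rfl | h)
        · rcases hC with h' | h'; exact hyWC.2 h'; exact hxWC.2 h'
        · exact hv h
    by_cases hyv : y = v
    · subst hyv
      refine ih _ _ ?_ ?_ ?_ h1
      · rintro (rfl | h)
        · rcases hC with h' | h'; exact hxWC.2 h'; exact hyWC.2 h'
        · exact hu h
      · rintro (rfl | h); exact hxy rfl; exact hv h
      · exact Or.inr (Set.mem_insert _ _)
    · refine ih _ _ ?_ ?_ ?_ h1
      · rintro (rfl | h); exact hxu rfl; exact hu h
      · rintro (rfl | h); exact hxv rfl; exact hv h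
      · rcases hC with h' | h'
        · exact Or.inl (Set.mem_insert_of_mem _ h')
        · exact Or.inr (Set.mem_insert_of_mem _ h')


/-- Lemma L2 (two leaves with common support, family form): every winning set
contains `u1` or `v`, and `u2` or `v`. Client wins from any `Safe` position. -/
theorem lemL2 {F : Set (Set X)} {u1 u2 v : X} (h12 : u1 ≠ u2)
    (hF1 : ∀ e ∈ F, u1 ∈ e ∨ v ∈ e) (hF2 : ∀ e ∈ F, u2 ∈ e ∨ v ∈ e) :
    ∀ t (W C : Set X), v ∉ W →
      ((u1 ∉ W ∧ u2 ∉ W) ∨ (u1 ∉ W ∧ (v ∈ C ∨ u1 ∈ C)) ∨ (u2 ∉ W ∧ (v ∈ C ∨ u2 ∈ C))) →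
      ¬ wcWin F t W C := by
  intro t
  induction t with
  | zero =>
    rintro W C hv hsafe ⟨e, he, hew⟩
    rcases hsafe with ⟨h1, -⟩ | ⟨h1, -⟩ | ⟨h2, -⟩
    · rcases hF1 e he with h | h; exact h1 (hew h); exact hv (hew h)
    · rcases hF1 e he with h | h; exact h1 (hew h); exact hv (hew h)
    · rcases hF2 e he with h | h; exact h2 (hew h); exact hv (hew h)
  | succ t ih =>
    rintro W C hv hsafe (⟨e, he, hew⟩ | ⟨x, y, hxy, hx, hy, hb1, hb2⟩)
    · rcases hsafe with ⟨h1, -⟩ | ⟨h1, -⟩ | ⟨h2, -⟩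
      · rcases hF1 e he with h | h; exact h1 (hew h); exact hv (hew h)
      · rcases hF1 e he with h | h; exact h1 (hew h); exact hv (hew h)
      · rcases hF2 e he with h | h; exact h2 (hew h); exact hv (hew h)
    have hxW : x ∉ W ∧ x ∉ C := by simpa using hx
    have hyW : y ∉ W ∧ y ∉ C := by simpa using hy
    -- helper facts
    -- case analysis: v offered?
    by_cases hxv : x = v
    · subst hxv
      -- give v=x to Client, y → W
      refine ih (insert y W) (insert x C) ?_ ?_ hb2
      · rintro (rfl | h); exact hxy rfl; exact hv h
      · -- new safe
        by_cases hy1 : y = u1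
        · subst hy1
          refine Or.inr (Or.inr ⟨?_, Or.inl (Set.mem_insert _ _)⟩)
          rintro (rfl | h)
          · exact h12 rfl
          · -- u2 ∉ W from old safe
            rcases hsafe with ⟨-, h2⟩ | ⟨-, hc⟩ | ⟨h2, hc⟩
            · exact h2 h
            · rcases hc with hc | hc; exact hxW.2 hc; exact hyW.2 hc
            · exact h2 h
        · by_cases hy2 : y = u2
          · subst hy2
            refine Or.inr (Or.inl ⟨?_, Or.inl (Set.mem_insert _ _)⟩)
            rintro (rfl | h)
            · exact hy1 rfl
            · rcases hsafe with ⟨h1, -⟩ | ⟨h1, hc⟩ | ⟨-, hc⟩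
              · exact h1 h
              · exact h1 h
              · rcases hc with hc | hc; exact hxW.2 hc; exact hyW.2 hc
          · -- y is plain
            rcases hsafe with ⟨h1, h2⟩ | ⟨h1, hc⟩ | ⟨h2, hc⟩
            · exact Or.inl ⟨by rintro (rfl | h); exact hy1 rfl; exact h1 h,
                by rintro (rfl | h); exact hy2 rfl; exact h2 h⟩
            · exact Or.inr (Or.inl ⟨by rintro (rfl | h); exact hy1 rfl; exact h1 h,
                by rcases hc with hc | hc
                   · exact Or.inl (Set.mem_insert_of_mem _ hc)
                   · exact Or.inl (Set.mem_insert _ _)⟩)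
            · exact Or.inr (Or.inr ⟨by rintro (rfl | h); exact hy2 rfl; exact h2 h,
                by rcases hc with hc | hc
                   · exact Or.inl (Set.mem_insert_of_mem _ hc)
                   · exact Or.inl (Set.mem_insert _ _)⟩)
    · by_cases hyv : y = v
      · subst hyv
        -- give v=y to Client, x → W
        refine ih (insert x W) (insert y C) ?_ ?_ hb1
        · rintro (rfl | h); exact hxy rfl; exact hv h
        · by_cases hx1 : x = u1
          · subst hx1
            refine Or.inr (Or.inr ⟨?_, Or.inl (Set.mem_insert _ _)⟩)
            rintro (rfl | h)
            · exact h12 rfl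
            · rcases hsafe with ⟨-, h2⟩ | ⟨-, hc⟩ | ⟨h2, hc⟩
              · exact h2 h
              · rcases hc with hc | hc; exact hyW.2 hc; exact hxW.2 hc
              · exact h2 h
          · by_cases hx2 : x = u2
            · subst hx2
              refine Or.inr (Or.inl ⟨?_, Or.inl (Set.mem_insert _ _)⟩)
              rintro (rfl | h)
              · exact hx1 rfl
              · rcases hsafe with ⟨h1, -⟩ | ⟨h1, hc⟩ | ⟨-, hc⟩
                · exact h1 h
                · exact h1 h
                · rcases hc with hc | hc; exact hyW.2 hc; exact hxW.2 hc
            · rcases hsafe with ⟨h1, h2⟩ | ⟨h1, hc⟩ | ⟨h2, hc⟩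
              · exact Or.inl ⟨by rintro (rfl | h); exact hx1 rfl; exact h1 h,
                  by rintro (rfl | h); exact hx2 rfl; exact h2 h⟩
              · exact Or.inr (Or.inl ⟨by rintro (rfl | h); exact hx1 rfl; exact h1 h,
                  by rcases hc with hc | hc
                     · exact Or.inl (Set.mem_insert_of_mem _ hc)
                     · exact Or.inl (Set.mem_insert _ _)⟩)
              · exact Or.inr (Or.inr ⟨by rintro (rfl | h); exact hx2 rfl; exact h2 h,
                  by rcases hc with hc | hc
                     · exact Or.inl (Set.mem_insert_of_mem _ hc)
                     · exact Or.inl (Set.mem_insert _ _)⟩)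
      · -- v not offered
        by_cases hx1 : x = u1
        · subst hx1
          -- give u1=x to Client, y → W
          refine ih (insert y W) (insert x C) ?_ ?_ hb2
          · rintro (rfl | h); exact hyv rfl; exact hv h
          · exact Or.inr (Or.inl ⟨by rintro (rfl | h); exact hxy rfl; exact hxW.1 h,
              Or.inr (Set.mem_insert _ _)⟩)
        · by_cases hx2 : x = u2
          · subst hx2
            refine ih (insert y W) (insert x C) ?_ ?_ hb2
            · rintro (rfl | h); exact hyv rfl; exact hv h
            · exact Or.inr (Or.inr ⟨by rintro (rfl | h); exact hxy rfl; exact hxW.1 h,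
                Or.inr (Set.mem_insert _ _)⟩)
          · by_cases hy1 : y = u1
            · subst hy1
              refine ih (insert x W) (insert y C) ?_ ?_ hb1
              · rintro (rfl | h); exact hxv rfl; exact hv h
              · exact Or.inr (Or.inl ⟨by rintro (rfl | h); exact (hxy rfl).elim; exact hyW.1 h,
                  Or.inr (Set.mem_insert _ _)⟩)
            · by_cases hy2 : y = u2
              · subst hy2
                refine ih (insert x W) (insert y C) ?_ ?_ hb1
                · rintro (rfl | h); exact hxv rfl; exact hv h
                · refine Or.inr (Or.inr ⟨?_, Or.inr (Set.mem_insert _ _)⟩)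
                  rintro (rfl | h); exact hxy rfl; exact hyW.1 h
              · -- fully plain
                refine ih (insert x W) (insert y C) ?_ ?_ hb1
                · rintro (rfl | h); exact hxv rfl; exact hv h
                · rcases hsafe with ⟨h1, h2⟩ | ⟨h1, hc⟩ | ⟨h2, hc⟩
                  · exact Or.inl ⟨by rintro (rfl | h); exact hx1 rfl; exact h1 h,
                      by rintro (rfl | h); exact hx2 rfl; exact h2 h⟩
                  · exact Or.inr (Or.inl ⟨by rintro (rfl | h); exact hx1 rfl; exact h1 h,
                      by rcases hc with hc | hc
                         · exact Or.inl (Set.mem_insert_of_mem _ hc)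
                         · exact Or.inr (Set.mem_insert_of_mem _ hc)⟩)
                  · exact Or.inr (Or.inr ⟨by rintro (rfl | h); exact hx2 rfl; exact h2 h,
                      by rcases hc with hc | hc
                         · exact Or.inl (Set.mem_insert_of_mem _ hc)
                         · exact Or.inr (Set.mem_insert_of_mem _ hc)⟩)


/-- Lemma T : bound the size of the claimed winning set by the number of rounds. -/
theorem lemT [Finite X] {F : Set (Set X)} :
    ∀ (t : ℕ) (W C : Set X), wcWin F t W C → ∀ s : ℕ, W.ncard + t ≤ s →
      wcWin {D | D ∈ F ∧ D.ncard ≤ s} t W C := by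
  intro t
  induction t with
  | zero =>
    rintro W C ⟨e, he, hew⟩ s hs
    exact ⟨e, ⟨he, le_trans (Set.ncard_le_ncard hew (Set.toFinite W)) (by omega)⟩, hew⟩
  | succ t ih =>
    rintro W C (⟨e, he, hew⟩ | ⟨x, y, hxy, hx, hy, h1, h2⟩) s hs
    · exact Or.inl ⟨e, ⟨he, le_trans (Set.ncard_le_ncard hew (Set.toFinite W)) (by omega)⟩, hew⟩
    · refine Or.inr ⟨x, y, hxy, hx, hy, ih _ _ h1 s ?_, ih _ _ h2 s ?_⟩ <;>
      · calc (insert _ W).ncard + t ≤ (W.ncard + 1) + t := by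
              have := Set.ncard_insert_le x W; have := Set.ncard_insert_le y W; omega
            _ ≤ s := by omega

/-- Lemma U : the pairing strategy for Waiter. -/
theorem lemU [Fintype X] [DecidableEq X] {F : Set (Set X)} (f : X → X)
    (hf : ∀ a, f (f a) = a)
    (hP : ∀ D : Set X, (∀ x, x ∈ D ∨ f x ∈ D) → D.ncard ≤ Fintype.card X / 2 → D ∈ F) :
    ∀ (k : ℕ) (S : Finset X), S.card = 2 * k → (∀ x ∈ S, f x ∈ S) →
      (∀ x ∈ S, f x ≠ x) →
    ∀ (W C : Set X), (∀ x ∈ S, x ∉ W ∧ x ∉ C) →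
      (∀ x : X, x ∉ S → (x ∈ W ∨ f x ∈ W)) →
      W.ncard + k ≤ Fintype.card X / 2 →
      wcWin F k W C := by
  intro k
  induction k with
  | zero =>
    intro S hS _ _ W C _ hdone hcard
    exact ⟨W, hP W (fun x => hdone x (by simp [Finset.card_eq_zero.mp (by omega : S.card = 0)]))
      (by omega), subset_rfl⟩
  | succ k ih =>
    intro S hS hclosed hne W C hfree hdone hcard
    have hSne : S.Nonempty := by
      rw [← Finset.card_pos]; omega
    obtain ⟨x, hxS⟩ := hSne
    have hyS : f x ∈ S := hclosed x hxS
    have hxy : x ≠ f x := (hne x hxS).symm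
    set y := f x with hy
    have hcard' : ((S.erase x).erase y).card = 2 * k := by
      rw [Finset.card_erase_of_mem (Finset.mem_erase.mpr ⟨Ne.symm hxy, hyS⟩),
        Finset.card_erase_of_mem hxS]
      omega
    have hinv : ∀ a, f (f a) = a ∨ True := fun _ => Or.inr trivial
    have hclosed' : ∀ a ∈ (S.erase x).erase y, f a ∈ (S.erase x).erase y := by
      intro a ha
      have haS : a ∈ S := Finset.mem_of_mem_erase (Finset.mem_of_mem_erase ha)
      have hax : a ≠ x := Finset.ne_of_mem_erase (Finset.mem_of_mem_erase ha)
      have hay : a ≠ y := Finset.ne_of_mem_erase ha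
      refine Finset.mem_erase.mpr ⟨?_, Finset.mem_erase.mpr ⟨?_, hclosed a haS⟩⟩
      · intro hfa
        have ha2 : a = f y := by rw [← hfa, hf]
        rw [hy, hf] at ha2
        exact hax ha2
      · intro hfa
        have ha2 : a = f x := by rw [← hfa, hf]
        rw [← hy] at ha2
        exact hay ha2
    have hfyx : f y = x := by rw [hy, hf]
    have hxfree := hfree x hxS
    have hyfree := hfree y hyS
    have hbranch : ∀ z o : X, z = x ∧ o = y ∨ z = y ∧ o = x →
        wcWin F k (insert z W) (insert o C) := by
      rintro z o hzo
      have hzS : z ∈ S := by rcases hzo with ⟨rfl, rfl⟩ | ⟨rfl, rfl⟩ <;> assumption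
      have hoS : o ∈ S := by rcases hzo with ⟨rfl, rfl⟩ | ⟨rfl, rfl⟩ <;> assumption
      refine ih ((S.erase x).erase y) hcard' hclosed'
        (fun a ha => hne a (Finset.mem_of_mem_erase (Finset.mem_of_mem_erase ha)))
        (insert z W) (insert o C) ?_ ?_ ?_
      · intro a ha
        have haS : a ∈ S := Finset.mem_of_mem_erase (Finset.mem_of_mem_erase ha)
        have hax : a ≠ x := Finset.ne_of_mem_erase (Finset.mem_of_mem_erase ha)
        have hay : a ≠ y := Finset.ne_of_mem_erase ha
        have haz : a ≠ z := by rcases hzo with ⟨rfl, -⟩ | ⟨rfl, -⟩ <;> assumption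
        have hao : a ≠ o := by rcases hzo with ⟨-, rfl⟩ | ⟨-, rfl⟩ <;> assumption
        constructor
        · rintro (h | h); exact haz h; exact (hfree a haS).1 h
        · rintro (h | h); exact hao h; exact (hfree a haS).2 h
      · intro a ha
        by_cases haS : a ∈ S
        · by_cases hax : a = x
          · subst hax
            rcases hzo with ⟨rfl, rfl⟩ | ⟨rfl, rfl⟩
            · exact Or.inl (Set.mem_insert _ _)
            · exact Or.inr (by rw [← hy]; exact Set.mem_insert _ _)
          · have hay : a = y := by
              by_contra hay
              exact ha (Finset.mem_erase.mpr ⟨hay, Finset.mem_erase.mpr ⟨hax, haS⟩⟩)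
            subst hay
            rcases hzo with ⟨rfl, rfl⟩ | ⟨rfl, rfl⟩
            · exact Or.inr (by rw [hfyx]; exact Set.mem_insert _ _)
            · exact Or.inl (Set.mem_insert _ _)
        · rcases hdone a haS with h | h
          · exact Or.inl (Set.mem_insert_of_mem _ h)
          · exact Or.inr (Set.mem_insert_of_mem _ h)
      · have := Set.ncard_insert_le z W; omega
    refine Or.inr ⟨x, y, hxy, ?_, ?_, ?_, ?_⟩
    · simp [hxfree.1, hxfree.2]
    · simp [hyfree.1, hyfree.2]
    · exact hbranch x y (Or.inl ⟨rfl, rfl⟩)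
    · exact hbranch y x (Or.inr ⟨rfl, rfl⟩)


/-- Lemma R: reduction of the game by a pendant pair `{u, v}`. -/
theorem lemR {P : Set (Set X)} {s : Set X} {P' : Set (Set ↥s)} {u v : X}
    (hus : u ∉ s) (hvs : v ∉ s) (huv : u ≠ v)
    (hall : ∀ x : X, x ≠ u → x ≠ v → x ∈ s)
    (H1 : ∀ e ∈ P, v ∉ e → u ∈ e)
    (H2 : ∀ e ∈ P, v ∉ e → ((↑) ⁻¹' e : Set ↥s) ∈ P') :
    ∀ (t : ℕ) (W C : Set X),
      ((u ∉ W ∧ u ∉ C ∧ v ∉ W ∧ v ∉ C) ∨ (u ∈ W ∧ v ∈ C ∧ v ∉ W)) →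
      wcWin P t W C → wcWin P' t ((↑) ⁻¹' W) ((↑) ⁻¹' C) := by
  have hFuv : ∀ e ∈ P, u ∈ e ∨ v ∈ e := by
    intro e he
    by_cases hv : v ∈ e
    · exact Or.inr hv
    · exact Or.inl (H1 e he hv)
  have hpre : ∀ (x : X) (hx : x ∈ s) (W : Set X),
      ((↑) ⁻¹' (insert x W) : Set ↥s) = insert ⟨x, hx⟩ ((↑) ⁻¹' W) := by
    intro x hx W
    ext ⟨a, ha⟩
    simp [Set.mem_insert_iff, Subtype.ext_iff]
  have hpre2 : ∀ (x : X), x ∉ s → ∀ (W : Set X),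
      ((↑) ⁻¹' (insert x W) : Set ↥s) = (↑) ⁻¹' W := by
    intro x hx W
    ext ⟨a, ha⟩
    simp only [Set.mem_preimage, Set.mem_insert_iff, or_iff_right_iff_imp]
    rintro rfl; exact absurd ha hx
  intro t
  induction t with
  | zero =>
    rintro W C hinv ⟨e, he, hew⟩
    have hvW : v ∉ W := by rcases hinv with ⟨-, -, h, -⟩ | ⟨-, -, h⟩ <;> exact h
    have hve : v ∉ e := fun h => hvW (hew h)
    exact ⟨(↑) ⁻¹' e, H2 e he hve, Set.preimage_mono hew⟩
  | succ t ih =>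
    rintro W C hinv (⟨e, he, hew⟩ | ⟨x, y, hxy, hx, hy, hb1, hb2⟩)
    · have hvW : v ∉ W := by rcases hinv with ⟨-, -, h, -⟩ | ⟨-, -, h⟩ <;> exact h
      have hve : v ∉ e := fun h => hvW (hew h)
      exact Or.inl ⟨(↑) ⁻¹' e, H2 e he hve, Set.preimage_mono hew⟩
    have hxf : x ∉ W ∧ x ∉ C := by simpa using hx
    have hyf : y ∉ W ∧ y ∉ C := by simpa using hy
    -- in state (b), u and v are claimed, so offered vertices differ from u, v
    rcases hinv with ⟨huW, huC, hvW, hvC⟩ | ⟨huW, hvC, hvW⟩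
    · -- state (a) : u, v both unclaimed
      by_cases hxu : x = u
      · subst hxu
        by_cases hyv : y = v
        · subst hyv
          -- the pair {u, v} is offered: u → W, v → C
          have := ih (insert x W) (insert y C) (Or.inr ⟨Set.mem_insert _ _,
            Set.mem_insert _ _, by rintro (h | h); exact huv h.symm; exact hvW h⟩) hb1
          rw [hpre2 x hus, hpre2 y hvs] at this
          exact wcWin_succ this
        · -- u offered with a plain y : give u to Client and win by lemS
          exfalso
          refine lemS hFuv t (insert y W) (insert x C) ?_ ?_ (Or.inl (Set.mem_insert _ _)) hb2
          · rintro (h | h); exact hxy h; exact huW h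
          · rintro (h | h); exact hyv h.symm; exact hvW h
      · by_cases hxv : x = v
        · subst hxv
          by_cases hyu : y = u
          · subst hyu
            -- pair {v, u} : u=y → W, v=x → C
            have := ih (insert y W) (insert x C) (Or.inr ⟨Set.mem_insert _ _,
              Set.mem_insert _ _, by rintro (h | h); exact hxy h; exact hvW h⟩) hb2
            rw [hpre2 y hus, hpre2 x hvs] at this
            exact wcWin_succ this
          · exfalso
            refine lemS hFuv t (insert y W) (insert x C) ?_ ?_
              (Or.inr (Set.mem_insert _ _)) hb2
            · rintro (h | h); exact hyu h.symm; exact huW h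
            · rintro (h | h); exact hxy h; exact hvW h
        · by_cases hyu : y = u
          · subst hyu
            exfalso
            refine lemS hFuv t (insert x W) (insert y C) ?_ ?_
              (Or.inl (Set.mem_insert _ _)) hb1
            · rintro (h | h); exact hxy h.symm; exact huW h
            · rintro (h | h); exact hxv h.symm; exact hvW h
          · by_cases hyv : y = v
            · subst hyv
              exfalso
              refine lemS hFuv t (insert x W) (insert y C) ?_ ?_
                (Or.inr (Set.mem_insert _ _)) hb1
              · rintro (h | h); exact hxu h.symm; exact huW h
              · rintro (h | h); exact hxy h.symm; exact hvW h
            · -- plain pair : simulate in the small game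
              have hxs : x ∈ s := hall x hxu hxv
              have hys : y ∈ s := hall y hyu hyv
              refine Or.inr ⟨⟨x, hxs⟩, ⟨y, hys⟩, ?_, ?_, ?_, ?_, ?_⟩
              · simp [Subtype.ext_iff, hxy]
              · simp [hxf.1, hxf.2]
              · simp [hyf.1, hyf.2]
              · have := ih (insert x W) (insert y C) (Or.inl ⟨by simp [huW, Ne.symm hxu],
                  by simp [huC, Ne.symm hyu], by simp [hvW, Ne.symm hxv],
                  by simp [hvC, Ne.symm hyv]⟩) hb1
                rwa [hpre x hxs, hpre y hys] at this
              · have := ih (insert y W) (insert x C) (Or.inl ⟨by simp [huW, Ne.symm hyu],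
                  by simp [huC, Ne.symm hxu], by simp [hvW, Ne.symm hyv],
                  by simp [hvC, Ne.symm hxv]⟩) hb2
                rwa [hpre y hys, hpre x hxs] at this
    · -- state (b) : u ∈ W, v ∈ C ; offered vertices are plain
      have hxu : x ≠ u := fun h => hxf.1 (h ▸ huW)
      have hyu : y ≠ u := fun h => hyf.1 (h ▸ huW)
      have hxv : x ≠ v := fun h => hxf.2 (h ▸ hvC)
      have hyv : y ≠ v := fun h => hyf.2 (h ▸ hvC)
      have hxs : x ∈ s := hall x hxu hxv
      have hys : y ∈ s := hall y hyu hyv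
      refine Or.inr ⟨⟨x, hxs⟩, ⟨y, hys⟩, ?_, ?_, ?_, ?_, ?_⟩
      · simp [Subtype.ext_iff, hxy]
      · simp [hxf.1, hxf.2]
      · simp [hyf.1, hyf.2]
      · have := ih (insert x W) (insert y C) (Or.inr ⟨Set.mem_insert_of_mem _ huW,
          Set.mem_insert_of_mem _ hvC, by rintro (h | h); exact hxv h.symm; exact hvW h⟩) hb1
        rwa [hpre x hxs, hpre y hys] at this
      · have := ih (insert y W) (insert x C) (Or.inr ⟨Set.mem_insert_of_mem _ huW,
          Set.mem_insert_of_mem _ hvC, by rintro (h | h); exact hyv h.symm; exact hvW h⟩) hb2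
        rwa [hpre y hys, hpre x hxs] at this


section Graphs
open SimpleGraph
lemma exists_leaf [Fintype V] {G : SimpleGraph V} (hG : G.IsAcyclic)
    {a b : V} (hab : G.Adj a b) : ∃ u w, G.neighborSet u = {w} := by
  classical
  set L : Set ℕ := {n | ∃ (u v : V) (p : G.Walk u v), p.IsPath ∧ p.length = n} with hL
  have h1L : 1 ∈ L := by
    refine ⟨a, b, Walk.cons hab Walk.nil, ?_, rfl⟩
    rw [Walk.cons_isPath_iff]
    exact ⟨Walk.IsPath.nil, by simp [hab.ne]⟩
  have hbdd : BddAbove L := by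
    refine ⟨Fintype.card V, ?_⟩
    rintro n ⟨u, v, p, hp, rfl⟩
    exact le_of_lt hp.length_lt
  have hm : sSup L ∈ L := Nat.sSup_mem ⟨1, h1L⟩ hbdd
  set m := sSup L with hmdef
  have hm1 : 1 ≤ m := le_csSup hbdd h1L
  obtain ⟨u, v, p, hp, hlen⟩ := hm
  have hq : p.reverse.IsPath := hp.reverse
  have hqlen : p.reverse.length = m := by rw [Walk.length_reverse, hlen]
  -- destructure the reverse walk
  obtain ⟨z, hadj, r, hqr⟩ : ∃ (z : V) (h : G.Adj v z) (r : G.Walk z u),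
      p.reverse = Walk.cons h r := by
    cases hpr : p.reverse with
    | nil =>
      exfalso
      rw [hpr] at hqlen
      simp at hqlen
      omega
    | cons h r => exact ⟨_, h, r, rfl⟩
  refine ⟨v, z, ?_⟩
  ext w
  simp only [mem_neighborSet, Set.mem_singleton_iff]
  constructor
  · intro hwv
    by_contra hwz
    by_cases hsup : w ∈ p.reverse.support
    · -- two distinct paths from v to w
      have hP2 : (p.reverse.takeUntil w hsup).IsPath := hq.takeUntil hsup
      have hP1 : (Walk.cons hwv Walk.nil : G.Walk v w).IsPath := by
        rw [Walk.cons_isPath_iff]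
        exact ⟨Walk.IsPath.nil, by simp [hwv.ne]⟩
      have heq : (Walk.cons hwv Walk.nil : G.Walk v w) = p.reverse.takeUntil w hsup := by
        have := hG.path_unique ⟨Walk.cons hwv Walk.nil, hP1⟩ ⟨p.reverse.takeUntil w hsup, hP2⟩
        exact congrArg Subtype.val this
      have hspec := p.reverse.take_spec hsup
      rw [← heq] at hspec
      -- supports
      have hsupp := congrArg Walk.support hspec
      rw [Walk.support_append] at hsupp
      have hsupR : p.reverse.support = v :: z :: r.support.tail := by
        rw [hqr, Walk.support_cons, Walk.support_eq_cons r]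
        rfl
      rw [hsupR, Walk.support_cons, Walk.support_nil] at hsupp
      simp only [List.cons_append, List.nil_append, List.cons.injEq] at hsupp
      exact hwz hsupp.2.1
    · -- extend to a longer path
      have hq' : (Walk.cons hwv.symm p.reverse).IsPath := by
        rw [Walk.cons_isPath_iff]
        exact ⟨hq, hsup⟩
      have : m + 1 ∈ L := ⟨w, u, _, hq', by simp [hqlen]⟩
      have := le_csSup hbdd this
      omega
  · rintro rfl
    exact hadj


lemma acyclic_induce {G : SimpleGraph V} (hG : G.IsAcyclic) (s : Set V) :
    (G.induce s).IsAcyclic := by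
  intro v c hc
  exact hG _ ((Walk.map_isCycle_iff_of_injective (f := (Embedding.induce s).toHom)
    Subtype.val_injective).mpr hc)

lemma pm_partner {G : SimpleGraph V} {M : G.Subgraph} (h : M.IsPerfectMatching) :
    ∃ f : V → V, (∀ x, M.Adj x (f x)) ∧ (∀ x y, M.Adj x y → y = f x) ∧
      (∀ x, f (f x) = x) ∧ (∀ x, f x ≠ x) := by
  classical
  have hex : ∀ x : V, ∃! w, M.Adj x w := fun x => h.1 (h.2 x)
  set f : V → V := fun x => (hex x).choose with hf
  have hadj : ∀ x, M.Adj x (f x) := fun x => (hex x).choose_spec.1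
  have huniq : ∀ x y, M.Adj x y → y = f x := fun x y hxy => (hex x).choose_spec.2 y hxy
  refine ⟨f, hadj, huniq, ?_, ?_⟩
  · intro x
    exact (huniq (f x) x (hadj x).symm).symm
  · intro x hx
    have := hadj x
    rw [hx] at this
    exact G.irrefl (M.adj_sub this)

/-- Removing a pendant edge from a graph with a perfect matching. -/
lemma pm_restrict {G : SimpleGraph V} {M : G.Subgraph} (h : M.IsPerfectMatching)
    {u v : V} (hleaf : G.neighborSet u = {v}) :
    ∃ M' : (G.induce {x : V | x ≠ u ∧ x ≠ v}).Subgraph, M'.IsPerfectMatching := by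
  classical
  have hex : ∀ x : V, ∃! w, M.Adj x w := fun x => h.1 (h.2 x)
  have hMuv : M.Adj u v := by
    obtain ⟨w, hw, -⟩ := hex u
    have : w ∈ G.neighborSet u := M.adj_sub hw
    rw [hleaf, Set.mem_singleton_iff] at this
    rwa [this] at hw
  refine ⟨{ verts := Set.univ
            Adj := fun a b => M.Adj ↑a ↑b
            adj_sub := by
              rintro ⟨a, ha⟩ ⟨b, hb⟩ hab
              exact M.adj_sub hab
            edge_vert := fun _ => Set.mem_univ _
            symm := by
              constructor
              rintro ⟨a, ha⟩ ⟨b, hb⟩ hab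
              exact hab.symm }, ?_⟩
  rw [SimpleGraph.Subgraph.isPerfectMatching_iff]
  rintro ⟨a, ha⟩
  obtain ⟨w, hw, hwu⟩ := hex a
  have hwne : w ≠ u := by
    intro hweq
    obtain ⟨w', hw', hwu'⟩ := hex u
    have h1 : a = w' := hwu' a (hweq ▸ hw).symm
    have h2 : v = w' := hwu' v hMuv
    exact ha.2 (h1.trans h2.symm)
  have hwnv : w ≠ v := by
    intro hweq
    obtain ⟨w', hw', hwu'⟩ := hex v
    have h1 : a = w' := hwu' a (hweq ▸ hw).symm
    have h2 : u = w' := hwu' u hMuv.symm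
    exact ha.1 (h1.trans h2.symm)
  refine ⟨⟨w, hwne, hwnv⟩, hw, ?_⟩
  rintro ⟨y, hy⟩ hy2
  exact Subtype.ext (hwu y hy2)

/-- Adding a pendant edge to a graph with a perfect matching. -/
lemma pm_extend {G : SimpleGraph V} {u v : V} (huv : G.Adj u v)
    (M' : (G.induce {x : V | x ≠ u ∧ x ≠ v}).Subgraph) (h' : M'.IsPerfectMatching) :
    ∃ M : G.Subgraph, M.IsPerfectMatching := by
  classical
  have hex : ∀ x : ↥{x : V | x ≠ u ∧ x ≠ v}, ∃! w, M'.Adj x w := fun x => h'.1 (h'.2 x)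
  refine ⟨{ verts := Set.univ
            Adj := fun a b =>
              (∃ (ha : a ∈ {x : V | x ≠ u ∧ x ≠ v}) (hb : b ∈ {x : V | x ≠ u ∧ x ≠ v}),
                M'.Adj ⟨a, ha⟩ ⟨b, hb⟩) ∨
                (a = u ∧ b = v) ∨ (a = v ∧ b = u)
            adj_sub := ?_
            edge_vert := fun _ => Set.mem_univ _
            symm := ?_ }, ?_⟩
  · rintro a b (⟨ha, hb, hab⟩ | ⟨rfl, rfl⟩ | ⟨rfl, rfl⟩)
    · exact M'.adj_sub hab
    · exact huv
    · exact huv.symm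
  · constructor
    rintro a b (⟨ha, hb, hab⟩ | ⟨rfl, rfl⟩ | ⟨rfl, rfl⟩)
    · exact Or.inl ⟨hb, ha, hab.symm⟩
    · exact Or.inr (Or.inr ⟨rfl, rfl⟩)
    · exact Or.inr (Or.inl ⟨rfl, rfl⟩)
  · rw [SimpleGraph.Subgraph.isPerfectMatching_iff]
    intro x
    by_cases hxu : x = u
    · subst hxu
      refine ⟨v, Or.inr (Or.inl ⟨rfl, rfl⟩), ?_⟩
      rintro y (⟨ha, hb, hab⟩ | ⟨-, rfl⟩ | ⟨h1, -⟩)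
      · exact absurd rfl ha.1
      · rfl
      · exact absurd h1 huv.ne
    · by_cases hxv : x = v
      · subst hxv
        refine ⟨u, Or.inr (Or.inr ⟨rfl, rfl⟩), ?_⟩
        rintro y (⟨ha, hb, hab⟩ | ⟨h1, -⟩ | ⟨-, rfl⟩)
        · exact absurd rfl ha.2
        · exact absurd h1 huv.ne'
        · rfl
      · have hxs : x ∈ {x : V | x ≠ u ∧ x ≠ v} := ⟨hxu, hxv⟩
        obtain ⟨⟨w, hws⟩, hw, hwu⟩ := hex ⟨x, hxs⟩
        refine ⟨w, Or.inl ⟨hxs, hws, hw⟩, ?_⟩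
        rintro y (⟨ha, hb, hab⟩ | ⟨h1, -⟩ | ⟨h1, -⟩)
        · exact congrArg Subtype.val (hwu ⟨y, hb⟩ hab)
        · exact absurd h1 hxu
        · exact absurd h1 hxv


end Graphs

open SimpleGraph in
/-- Claim B : on a forest without a perfect matching, Client wins. -/
theorem claimB : ∀ (n : ℕ) (V : Type) [Fintype V] (G : SimpleGraph V),
    Fintype.card V = n → G.IsAcyclic →
    (¬ ∃ M : G.Subgraph, M.IsPerfectMatching) →
    ∀ t, ¬ wcWin {D : Set V | IsDomSet G D} t ∅ ∅ := by
  intro n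
  induction n using Nat.strong_induction_on with
  | _ n IH =>
  intro V _ G hcard hac hnpm t hwin
  classical
  by_cases hV : IsEmpty V
  · -- the empty forest has a (trivial) perfect matching
    refine hnpm ⟨⟨Set.univ, fun _ _ => False, fun h => h.elim, fun h => h.elim,
      ⟨fun _ _ h => h.elim⟩⟩, ?_, fun x => trivial⟩
    intro x hx
    exact (hV.false x).elim
  have hVne : Nonempty V := not_isEmpty_iff.mp hV
  by_cases hiso : ∃ u : V, G.neighborSet u = ∅
  · obtain ⟨u, hu⟩ := hiso
    refine lemS0 (F := {D : Set V | IsDomSet G D}) (u := u) ?_ t ∅ ∅ (Set.notMem_empty u) hwin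
    rintro e he
    rcases he u with h | ⟨z, hz, hadj⟩
    · exact h
    · exfalso
      have hmem : z ∈ G.neighborSet u := hadj.symm
      rw [hu] at hmem
      exact Set.notMem_empty z hmem
  · push_neg at hiso
    obtain ⟨a⟩ := hVne
    obtain ⟨b, hb⟩ := hiso a
    obtain ⟨u, v, hleaf⟩ := exists_leaf hac hb
    have huvadj : G.Adj u v := by
      have : v ∈ G.neighborSet u := by rw [hleaf]; exact rfl
      exact this
    have huv : u ≠ v := huvadj.ne
    have hclose : ∀ (e : Set V), IsDomSet G e → v ∉ e → u ∈ e := by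
      intro e he hve
      rcases he u with h | ⟨z, hz, hadj⟩
      · exact h
      · have : z ∈ G.neighborSet u := hadj.symm
        rw [hleaf, Set.mem_singleton_iff] at this
        exact absurd hz (this ▸ hve)
    by_cases htwo : ∃ u2, u2 ≠ u ∧ G.neighborSet u2 = {v}
    · -- two leaves with a common support
      obtain ⟨u2, hu2u, hleaf2⟩ := htwo
      have hclose2 : ∀ (e : Set V), IsDomSet G e → v ∉ e → u2 ∈ e := by
        intro e he hve
        rcases he u2 with h | ⟨z, hz, hadj⟩
        · exact h
        · have : z ∈ G.neighborSet u2 := hadj.symm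
          rw [hleaf2, Set.mem_singleton_iff] at this
          exact absurd hz (this ▸ hve)
      refine lemL2 (F := {D : Set V | IsDomSet G D}) (u1 := u) (u2 := u2) (v := v)
        (Ne.symm hu2u) ?_ ?_ t ∅ ∅ (by simp) (Or.inl (by simp)) hwin
      · intro e he
        by_cases hve : v ∈ e
        · exact Or.inr hve
        · exact Or.inl (hclose e he hve)
      · intro e he
        by_cases hve : v ∈ e
        · exact Or.inr hve
        · exact Or.inl (hclose2 e he hve)
    · -- reduction to the smaller forest
      push_neg at htwo
      set s : Set V := {x : V | x ≠ u ∧ x ≠ v} with hs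
      have hus : u ∉ s := fun h => h.1 rfl
      have hvs : v ∉ s := fun h => h.2 rfl
      have hall : ∀ x : V, x ≠ u → x ≠ v → x ∈ s := fun x h1 h2 => ⟨h1, h2⟩
      have hnpm' : ¬ ∃ M' : (G.induce s).Subgraph, M'.IsPerfectMatching := by
        rintro ⟨M', hM'⟩
        exact hnpm (pm_extend huvadj M' hM')
      have hcards : Fintype.card ↥s < n := by
        have h2 : Fintype.card ↥s < Fintype.card V :=
          Fintype.card_subtype_lt (p := fun x => x ∈ s) (x := u) (fun h => h.1 rfl)
        omega
      have hsim := lemR (P := {D : Set V | IsDomSet G D})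
        (P' := {D : Set ↥s | IsDomSet (G.induce s) D}) hus hvs huv hall
        (fun e he hve => hclose e he hve) ?_ t ∅ ∅ (Or.inl (by simp)) hwin
      · have hsim' : wcWin {D : Set ↥s | IsDomSet (G.induce s) D} t ∅ ∅ := by
          simpa using hsim
        exact IH (Fintype.card ↥s) hcards ↥s (G.induce s) rfl (acyclic_induce hac s)
          hnpm' t hsim'
      · -- H2 : restriction of a dominating set dominates the induced forest
        intro e he hve x
        rcases he ↑x with h | ⟨z, hz, hadj⟩
        · exact Or.inl h
        · have hzu : z ≠ u := by
            rintro rfl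
            have : ↑x ∈ G.neighborSet z := hadj
            rw [hleaf, Set.mem_singleton_iff] at this
            exact x.2.2 this
          have hzv : z ≠ v := fun h => hve (h ▸ hz)
          exact Or.inr ⟨⟨z, hzu, hzv⟩, hz, hadj⟩

open SimpleGraph in
/-- Claim C : on a forest with a perfect matching, Client can prevent any
dominating set of size less than `n/2` from being claimed. -/
theorem claimC : ∀ (n : ℕ) (V : Type) [Fintype V] (G : SimpleGraph V),
    Fintype.card V = n → G.IsAcyclic →
    (∃ M : G.Subgraph, M.IsPerfectMatching) →
    ∀ sz, sz < n / 2 →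
    ∀ t, ¬ wcWin {D : Set V | IsDomSet G D ∧ D.ncard ≤ sz} t ∅ ∅ := by
  intro n
  induction n using Nat.strong_induction_on with
  | _ n IH =>
  intro V _ G hcard hac hpm sz hsz t hwin
  classical
  obtain ⟨M, hM⟩ := hpm
  by_cases hV : IsEmpty V
  · have hn0 : n = 0 := by rw [← hcard]; exact Fintype.card_eq_zero
    omega
  have hVne : Nonempty V := not_isEmpty_iff.mp hV
  have hnpos : 0 < n := by rw [← hcard]; exact Fintype.card_pos
  have heven : Even n := by rw [← hcard]; exact hM.even_card
  by_cases hsz0 : sz = 0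
  · subst hsz0
    refine not_wcWin_empty (wcWin_mono_family ?_ hwin)
    rintro D ⟨hdom, hcnt⟩
    have hD0 : D = ∅ := Set.ncard_eq_zero (Set.toFinite D) |>.mp (Nat.le_zero.mp hcnt)
    subst hD0
    obtain ⟨a⟩ := hVne
    rcases hdom a with h | ⟨z, hz, -⟩
    · exact h
    · exact hz
  · obtain ⟨f, hadjf, huniqf, hinvol, hnef⟩ := pm_partner hM
    obtain ⟨a⟩ := hVne
    obtain ⟨u, v, hleaf⟩ := exists_leaf hac (M.adj_sub (hadjf a))
    have huvadj : G.Adj u v := by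
      have : v ∈ G.neighborSet u := by rw [hleaf]; exact rfl
      exact this
    have huv : u ≠ v := huvadj.ne
    have hfu : f u = v := by
      have : f u ∈ G.neighborSet u := M.adj_sub (hadjf u)
      rw [hleaf, Set.mem_singleton_iff] at this
      exact this
    set s : Set V := {x : V | x ≠ u ∧ x ≠ v} with hs
    obtain ⟨M', hM'⟩ := pm_restrict hM hleaf
    have hus : u ∉ s := fun h => h.1 rfl
    have hvs : v ∉ s := fun h => h.2 rfl
    have hall : ∀ x : V, x ≠ u → x ≠ v → x ∈ s := fun x h1 h2 => ⟨h1, h2⟩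
    have hclose : ∀ (e : Set V), IsDomSet G e → v ∉ e → u ∈ e := by
      intro e he hve
      rcases he u with h | ⟨z, hz, hadj⟩
      · exact h
      · have : z ∈ G.neighborSet u := hadj.symm
        rw [hleaf, Set.mem_singleton_iff] at this
        exact absurd hz (this ▸ hve)
    -- cardinality of the smaller forest
    have hsdiff : s = Set.univ \ {u, v} := by
      ext x
      simp [hs, Set.mem_diff]
    have hcardsub : Fintype.card ↥s = n - 2 := by
      have h1 : Fintype.card ↥s = s.ncard := by
        rw [← Nat.card_coe_set_eq, Nat.card_eq_fintype_card]
      rw [h1, hsdiff, Set.ncard_diff (s := ({u, v} : Set V)) (Set.subset_univ _),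
        Set.ncard_univ, Set.ncard_pair huv, Nat.card_eq_fintype_card, hcard]
    have hn2 : 2 ≤ n := by
      have : ({u, v} : Set V).ncard ≤ Set.univ.ncard :=
        Set.ncard_le_ncard (Set.subset_univ _) Set.finite_univ
      rw [Set.ncard_pair huv, Set.ncard_univ, Nat.card_eq_fintype_card, hcard] at this
      exact this
    obtain ⟨k, hk⟩ := heven
    have hsz1 : 1 ≤ sz := Nat.one_le_iff_ne_zero.mpr hsz0
    -- the simulation
    have hsim := lemR (P := {D : Set V | IsDomSet G D ∧ D.ncard ≤ sz})
      (P' := {D : Set ↥s | IsDomSet (G.induce s) D ∧ D.ncard ≤ sz - 1}) hus hvs huv hall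
      (fun e he hve => hclose e he.1 hve) ?_ t ∅ ∅ (Or.inl (by simp)) hwin
    · have hsim' : wcWin {D : Set ↥s | IsDomSet (G.induce s) D ∧ D.ncard ≤ sz - 1} t ∅ ∅ := by
        simpa using hsim
      refine IH (n - 2) (by omega) ↥s (G.induce s) hcardsub (acyclic_induce hac s)
        ⟨M', hM'⟩ (sz - 1) ?_ t hsim'
      omega
    · rintro e ⟨hdom, hcnt⟩ hve
      have hue : u ∈ e := hclose e hdom hve
      constructor
      · -- dominating the induced forest
        intro x
        rcases hdom ↑x with h | ⟨z, hz, hadj⟩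
        · exact Or.inl h
        · have hzu : z ≠ u := by
            rintro rfl
            have : ↑x ∈ G.neighborSet z := hadj
            rw [hleaf, Set.mem_singleton_iff] at this
            exact x.2.2 this
          have hzv : z ≠ v := fun h => hve (h ▸ hz)
          exact Or.inr ⟨⟨z, hzu, hzv⟩, hz, hadj⟩
      · -- cardinality bound
        have him : (Subtype.val '' ((↑) ⁻¹' e : Set ↥s)) = e \ {u} := by
          rw [Subtype.image_preimage_coe]
          ext x
          constructor
          · rintro ⟨hxs, hxe⟩
            exact ⟨hxe, hxs.1⟩
          · rintro ⟨hxe, hxu⟩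
            exact ⟨⟨hxu, fun h => hve (h ▸ hxe)⟩, hxe⟩
        have h2 : ((↑) ⁻¹' e : Set ↥s).ncard = (e \ {u}).ncard := by
          rw [← him, Set.ncard_image_of_injective _ Subtype.val_injective]
        rw [h2, Set.ncard_diff_singleton_of_mem hue]
        have hpos : 1 ≤ e.ncard := by
          have : e.Nonempty := ⟨u, hue⟩
          have := Set.ncard_pos (Set.toFinite e) |>.mpr this
          omega
        omega

end WCaux

/-- Theorem 1.7. Let `T` be a tree on `n` vertices. If `T`
has a perfect matching then `γ_WC(T) = s_WC(T) = n/2`; otherwise Dominator does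
not win the unbiased Waiter-Client domination game on `T`, i.e.
`γ_WC(T) = s_WC(T) = ∞`. -/
theorem wc_domination_trees {V : Type} [Finite V] (G : SimpleGraph V)
    (hT : G.IsTree) :
    ((∃ M : G.Subgraph, M.IsPerfectMatching) →
      gammaWC G = ((Nat.card V / 2 : ℕ) : ℕ∞) ∧
      sizeWC G = ((Nat.card V / 2 : ℕ) : ℕ∞)) ∧
    ((¬ ∃ M : G.Subgraph, M.IsPerfectMatching) →
      gammaWC G = ⊤ ∧ sizeWC G = ⊤) := by
  classical
  letI : Fintype V := Fintype.ofFinite V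
  have hAC : G.IsAcyclic := hT.IsAcyclic
  have hVne : Nonempty V := hT.isConnected.nonempty
  have hcard : Nat.card V = Fintype.card V := Nat.card_eq_fintype_card
  constructor
  · rintro ⟨M, hM⟩
    have heven : Even (Fintype.card V) := hM.even_card
    obtain ⟨f, hadjf, huniqf, hinvol, hnef⟩ := WCaux.pm_partner hM
    -- the pairing strategy
    have hU : wcWin {D : Set V | IsDomSet G D ∧ D.ncard ≤ Fintype.card V / 2}
        (Fintype.card V / 2) ∅ ∅ := by
      refine WCaux.lemU f hinvol ?_ (Fintype.card V / 2) Finset.univ ?_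
        (fun x _ => Finset.mem_univ _) (fun x _ => hnef x) ∅ ∅
        (fun x _ => ⟨Set.notMem_empty x, Set.notMem_empty x⟩) ?_ ?_
      · intro D hD hcnt
        refine ⟨?_, hcnt⟩
        intro x
        rcases hD x with h | h
        · exact Or.inl h
        · exact Or.inr ⟨f x, h, (M.adj_sub (hadjf x)).symm⟩
      · obtain ⟨k, hk⟩ := heven
        rw [Finset.card_univ, hk]
        omega
      · intro x hx
        exact absurd (Finset.mem_univ x) hx
      · rw [Set.ncard_empty]
        omega
    have hlow : ∀ sz, sz < Fintype.card V / 2 →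
        ∀ t, ¬ wcWin {D : Set V | IsDomSet G D ∧ D.ncard ≤ sz} t ∅ ∅ :=
      WCaux.claimC (Fintype.card V) V G rfl hAC ⟨M, hM⟩
    constructor
    · refine le_antisymm ?_ ?_
      · refine sInf_le ⟨Nat.card V / 2, rfl, ?_⟩
        rw [hcard]
        exact WCaux.wcWin_mono_family (fun D hD => hD.1) hU
      · refine le_sInf ?_
        rintro b ⟨t, rfl, hw⟩
        refine Nat.cast_le.mpr ?_
        by_contra hlt
        push_neg at hlt
        rw [hcard] at hlt
        have hw2 := WCaux.lemT t ∅ ∅ hw t (by rw [Set.ncard_empty]; omega)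
        exact hlow t hlt t (WCaux.wcWin_mono_family (fun D hD => hD) hw2)
    · refine le_antisymm ?_ ?_
      · refine sInf_le ⟨Nat.card V / 2, rfl, ?_⟩
        rw [hcard]
        exact WCaux.wcWin_mono_t (Nat.div_le_self _ _) hU
      · refine le_sInf ?_
        rintro b ⟨sz, rfl, hw⟩
        refine Nat.cast_le.mpr ?_
        by_contra hlt
        push_neg at hlt
        rw [hcard] at hlt hw
        exact hlow sz hlt (Fintype.card V) hw
  · intro hnpm
    have hB : ∀ t, ¬ wcWin {D : Set V | IsDomSet G D} t ∅ ∅ :=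
      WCaux.claimB (Fintype.card V) V G rfl hAC hnpm
    constructor
    · rw [gammaWC]
      refine sInf_eq_top.mpr ?_
      rintro b ⟨t, rfl, hw⟩
      exact absurd hw (hB t)
    · rw [sizeWC]
      refine sInf_eq_top.mpr ?_
      rintro b ⟨sz, rfl, hw⟩
      exact absurd (WCaux.wcWin_mono_family (fun D hD => hD.1) hw) (hB (Nat.card V))
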